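/- Let n ≥ 1 and let A = (a_{ij}) be an n×n matrix with entries in ℝ ∪ {−∞}. Then A is pseudo-diagonalizable — i.e., there exist a permutation π of {1,…,n}, reals p_1,…,p_n, and a pseudo-diagonal matrix D such that a_{ij} = p_i + D_{π(i),π(j)} − p_j for all i, j (with −∞ absorbing under addition) — if and only if every entry of A is real and for all i, j, k ∈ {1,…,n} with k ≠ i and k ≠ j one has a_{ik} + a_{kj} = a_{ij} when i ≠ j, and a_{ik} + a_{ki} = 0 when i = j. -/

import Mathlib

/-- A matrix `A` over `ℝ ∪ {−∞}` is pseudo-diagonalizable (similar, via a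
generalized permutation matrix given by a permutation `π` and reals `p i`, to a
pseudo-diagonal matrix `D`, i.e. a real matrix whose off-diagonal entries are `0`)
if and only if `A` is finite and satisfies `a_{ik} + a_{kj} = a_{ij}` for `i ≠ j` and
`a_{ik} + a_{ki} = 0` for `i = j`, whenever `k ≠ i, j`. -/
theorem pseudoDiagonalizable_iff {n : ℕ} (hn : 1 ≤ n)
    (A : Fin n → Fin n → WithBot ℝ) :
    (∃ (π : Equiv.Perm (Fin n)) (p : Fin n → ℝ) (D : Fin n → Fin n → ℝ),
        (∀ i j, i ≠ j → D i j = 0) ∧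
        ∀ i j, A i j = ((p i + D (π i) (π j) - p j : ℝ) : WithBot ℝ)) ↔
      ((∀ i j, A i j ≠ ⊥) ∧
        ∀ i j k : Fin n, k ≠ i → k ≠ j →
          (i ≠ j → A i k + A k j = A i j) ∧ (i = j → A i k + A k i = 0)) := by
  constructor
  · rintro ⟨π, p, D, hD, hA⟩
    refine ⟨fun i j => by rw [hA]; exact WithBot.coe_ne_bot, ?_⟩
    intro i j k hki hkj
    have hik : D (π i) (π k) = 0 := hD _ _ (fun h => hki (π.injective h.symm))
    have hkj' : D (π k) (π j) = 0 := hD _ _ (fun h => hkj (π.injective h))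
    constructor
    · intro hij
      have hij' : D (π i) (π j) = 0 := hD _ _ (fun h => hij (π.injective h))
      rw [hA, hA, hA, hik, hkj', hij']
      norm_cast
      ring
    · intro hij
      subst hij
      have hki' : D (π k) (π i) = 0 := hD _ _ (fun h => hki (π.injective h))
      rw [hA, hA, hik, hki']
      norm_cast
      ring
  · rintro ⟨hfin, hcond⟩
    have ha : ∀ i j, ∃ r : ℝ, A i j = (r : WithBot ℝ) := fun i j => by
      obtain ⟨r, hr⟩ := WithBot.ne_bot_iff_exists.mp (hfin i j)
      exact ⟨r, hr.symm⟩
    choose a haR using ha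
    set z : Fin n := ⟨0, hn⟩ with hz
    have anti : ∀ i k, k ≠ i → a i k + a k i = 0 := by
      intro i k hk
      have := (hcond i i k hk hk).2 rfl
      rw [haR, haR] at this
      exact_mod_cast this
    have tri : ∀ i j k, k ≠ i → k ≠ j → i ≠ j → a i k + a k j = a i j := by
      intro i j k h1 h2 h3
      have := (hcond i j k h1 h2).1 h3
      rw [haR, haR, haR] at this
      exact_mod_cast this
    refine ⟨Equiv.refl _, fun i => if i = z then 0 else a i z,
      fun i j => if i = j then a i i else 0, fun i j h => by simp [h], ?_⟩
    intro i j
    simp only [Equiv.refl_apply]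
    by_cases hij : i = j
    · subst hij
      simp only [↓reduceIte, haR]
      norm_cast
      ring
    · simp only [if_neg hij, haR]
      norm_cast
      split_ifs with hi hj hj
      · exact absurd (hi.trans hj.symm) hij
      · subst hi
        linarith [anti z j hj]
      · subst hj
        ring
      · have h1 := tri i j z (fun h => hi h.symm) (fun h => hj h.symm) hij
        linarith [anti z j hj]
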